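/- The i-circle of the doubling arbelos — the circle externally tangent to the circles (A₁, 2R₁) and (A₂, 2R₂) and internally tangent to the outer circle (O, R₁+R₂) — is archimedean: its radius s satisfies 1/s = 1/R₁ + 1/R₂. -/

import Mathlib

/-- **The i-circle of the doubling arbelos is archimedean.**
Doubling arbelos: `A₁ = (0,0)`, `A₂ = (2R₁+2R₂,0)`, `O = (R₁+R₂,0)`, with the added
circles `(A₁, 2R₁)` and `(A₂, 2R₂)`.  If the circle `(S, s)`, `s > 0`, is externally
tangent to `(A₁, 2R₁)` and `(A₂, 2R₂)` and internally tangent to `(O, R₁+R₂)`, then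
`1/s = 1/R₁ + 1/R₂`. -/
theorem doubling_arbelos_icircle_archimedean (R₁ R₂ s : ℝ)
    (hR₁ : 0 < R₁) (hR₂ : 0 < R₂) (hs : 0 < s)
    (A₁ A₂ O S : EuclideanSpace ℝ (Fin 2))
    (hA₁ : A₁ = !₂[0, 0]) (hA₂ : A₂ = !₂[2 * R₁ + 2 * R₂, 0]) (hO : O = !₂[R₁ + R₂, 0])
    (htangA₁ : dist S A₁ = s + 2 * R₁)
    (htangA₂ : dist S A₂ = s + 2 * R₂)
    (htangO : dist S O = R₁ + R₂ - s) :
    1 / s = 1 / R₁ + 1 / R₂ := by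
  have sq : ∀ (P : EuclideanSpace ℝ (Fin 2)) (r : ℝ), dist S P = r →
      (S 0 - P 0)^2 + (S 1 - P 1)^2 = r^2 := by
    intro P r h
    have h2 := congrArg (·^2) h
    simp only [EuclideanSpace.dist_eq, Fin.sum_univ_two, Real.dist_eq] at h2
    rw [Real.sq_sqrt (by positivity)] at h2
    simpa [sq_abs] using h2
  have h1 := sq _ _ htangA₁
  have h2 := sq _ _ htangA₂
  have h3 := sq _ _ htangO
  rw [hA₁] at h1; rw [hA₂] at h2; rw [hO] at h3
  simp only [PiLp.toLp_apply, Matrix.cons_val_zero, Matrix.cons_val_one, Matrix.head_cons] at h1 h2 h3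
  have key : s * (R₁ + R₂) = R₁ * R₂ := by nlinarith [sq_nonneg (S 0), sq_nonneg (S 1)]
  field_simp
  linarith [key]
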